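/- Let n ≥ 2 and let A₀ : ℝⁿ ∖ {0} → ℝⁿ be a continuous vector field, homogeneous of degree −1, satisfying x·A₀(x) = 0 for all x ≠ 0. Then for every unit vector ω ∈ ℝⁿ and every x₀ ≠ 0 with x₀·ω = 0, the function s ↦ A₀(x₀ + sω)·ω is integrable on ℝ. -/

import Mathlib

open Real MeasureTheory RealInnerProductSpace

/-- For a continuous vector field `A₀` on `ℝⁿ \ {0}` (`n ≥ 2`), homogeneous of degree `-1`
and transversal (`x ⬝ A₀ x = 0`), the function `s ↦ A₀(x₀+sω)⬝ω` is integrable on `ℝ`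
whenever `|ω| = 1`, `x₀ ≠ 0`, `x₀ ⬝ ω = 0`. -/
theorem integrable_line_integrand_of_transversal_homogeneous
    (n : ℕ) (hn : 2 ≤ n)
    (A₀ : EuclideanSpace ℝ (Fin n) → EuclideanSpace ℝ (Fin n))
    (hA₀cont : ContinuousOn A₀ {0}ᶜ)
    (hA₀hom : ∀ t : ℝ, 0 < t → ∀ x : EuclideanSpace ℝ (Fin n), x ≠ 0 →
      A₀ (t • x) = t⁻¹ • A₀ x)
    (hA₀trans : ∀ x : EuclideanSpace ℝ (Fin n), x ≠ 0 → ⟪x, A₀ x⟫ = 0) :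
    ∀ ω x₀ : EuclideanSpace ℝ (Fin n), ‖ω‖ = 1 → x₀ ≠ 0 → ⟪x₀, ω⟫ = 0 →
      Integrable (fun s : ℝ => ⟪A₀ (x₀ + s • ω), ω⟫) := by
  intro ω x₀ hω hx₀ horth
  set a : ℝ := ‖x₀‖ with ha
  have ha0 : 0 < a := norm_pos_iff.mpr hx₀
  -- bound on the sphere
  obtain ⟨M₀, hM₀⟩ := (isCompact_sphere (0 : EuclideanSpace ℝ (Fin n)) 1).exists_bound_of_continuousOn
    (hA₀cont.mono (by
      intro x hx
      simp only [Metric.mem_sphere, dist_zero_right] at hx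
      simp only [Set.mem_compl_iff, Set.mem_singleton_iff]
      intro h; rw [h] at hx; simp at hx))
  set M : ℝ := max M₀ 0 with hMdef
  have hM0 : 0 ≤ M := le_max_right _ _
  -- decay: ‖A₀ y‖ ≤ M / ‖y‖
  have hdecay : ∀ y : EuclideanSpace ℝ (Fin n), y ≠ 0 → ‖A₀ y‖ ≤ M / ‖y‖ := by
    intro y hy
    have ht : (0:ℝ) < ‖y‖ := norm_pos_iff.mpr hy
    have hz : (‖y‖⁻¹ • y) ≠ 0 := smul_ne_zero (by positivity) hy
    have hsphere : (‖y‖⁻¹ • y) ∈ Metric.sphere (0 : EuclideanSpace ℝ (Fin n)) 1 := by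
      simp [norm_smul, abs_of_pos (inv_pos.mpr ht), inv_mul_cancel₀ ht.ne']
    have hrw : y = ‖y‖ • (‖y‖⁻¹ • y) := by
      rw [smul_smul, mul_inv_cancel₀ ht.ne', one_smul]
    have := hA₀hom ‖y‖ ht (‖y‖⁻¹ • y) hz
    rw [← hrw] at this
    rw [this, norm_smul, norm_inv, norm_norm]
    rw [div_eq_inv_mul]
    exact mul_le_mul_of_nonneg_left ((hM₀ _ hsphere).trans (le_max_left _ _))
      (by positivity)
  -- norm of the line point
  have hnorm : ∀ s : ℝ, ‖x₀ + s • ω‖ ^ 2 = a ^ 2 + s ^ 2 := by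
    intro s
    have h1 : ⟪x₀, s • ω⟫ = 0 := by rw [real_inner_smul_right, horth, mul_zero]
    have := @norm_add_sq_real (EuclideanSpace ℝ (Fin n)) _ _ x₀ (s • ω)
    rw [h1] at this
    rw [this, norm_smul, hω]
    simp [mul_pow, sq_abs, ha]
  have hne : ∀ s : ℝ, x₀ + s • ω ≠ 0 := by
    intro s h
    have := hnorm s
    rw [h] at this
    simp at this
    nlinarith
  have hage : ∀ s : ℝ, a ≤ ‖x₀ + s • ω‖ := by
    intro s
    have h2 := hnorm s
    nlinarith [norm_nonneg (x₀ + s • ω), sq_nonneg s]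
  have hsge : ∀ s : ℝ, |s| ≤ ‖x₀ + s • ω‖ := by
    intro s
    have h2 := hnorm s
    nlinarith [norm_nonneg (x₀ + s • ω), abs_nonneg s, sq_abs s, sq_nonneg a]
  -- continuity hence measurability
  have hcont : Continuous (fun s : ℝ => ⟪A₀ (x₀ + s • ω), ω⟫) := by
    have hline : Continuous (fun s : ℝ => x₀ + s • ω) := by continuity
    have : Continuous (fun s : ℝ => A₀ (x₀ + s • ω)) :=
      hA₀cont.comp_continuous hline (fun s => by
        simp only [Set.mem_compl_iff, Set.mem_singleton_iff]; exact hne s)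
    exact this.inner continuous_const
  set K : ℝ := M / a + a * M with hK
  have hKnn : 0 ≤ K := by positivity
  refine (integrable_inv_one_add_sq.const_mul K).mono hcont.aestronglyMeasurable ?_
  refine Filter.Eventually.of_forall (fun s => ?_)
  have hy := hne s
  set y := x₀ + s • ω with hydef
  have hA : ‖A₀ y‖ ≤ M / ‖y‖ := hdecay y hy
  have hyp : (0:ℝ) < ‖y‖ := norm_pos_iff.mpr hy
  have hb1 : |⟪A₀ y, ω⟫| ≤ M / a := by
    calc |⟪A₀ y, ω⟫| ≤ ‖A₀ y‖ * ‖ω‖ := abs_real_inner_le_norm _ _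
      _ = ‖A₀ y‖ := by rw [hω, mul_one]
      _ ≤ M / ‖y‖ := hA
      _ ≤ M / a := by
          apply div_le_div_of_nonneg_left hM0 ha0 (hage s)
  -- transversality gives s * f s = -⟪x₀, A₀ y⟫
  have htr : s * ⟪A₀ y, ω⟫ = -⟪x₀, A₀ y⟫ := by
    have h0 := hA₀trans y hy
    rw [hydef, inner_add_left, real_inner_smul_left] at h0
    have hcomm : ⟪A₀ y, ω⟫ = ⟪ω, A₀ y⟫ := real_inner_comm _ _
    rw [hcomm]
    linarith
  have hb2 : s ^ 2 * |⟪A₀ y, ω⟫| ≤ a * M := by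
    have h1 : |s * ⟪A₀ y, ω⟫| ≤ a * (M / ‖y‖) := by
      rw [htr, abs_neg]
      calc |⟪x₀, A₀ y⟫| ≤ ‖x₀‖ * ‖A₀ y‖ := abs_real_inner_le_norm _ _
        _ ≤ a * (M / ‖y‖) := mul_le_mul_of_nonneg_left hA (norm_nonneg _)
    calc s ^ 2 * |⟪A₀ y, ω⟫| = |s| * |s * ⟪A₀ y, ω⟫| := by
          rw [abs_mul, ← sq_abs s]; ring
      _ ≤ ‖y‖ * (a * (M / ‖y‖)) := by
          apply mul_le_mul (hsge s) h1 (abs_nonneg _) hyp.le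
      _ = a * M := by field_simp
  have hkey : |⟪A₀ y, ω⟫| * (1 + s ^ 2) ≤ K := by
    rw [hK]
    nlinarith [abs_nonneg (⟪A₀ y, ω⟫ : ℝ), sq_nonneg s, hb1, hb2]
  have h1s : (0:ℝ) < 1 + s ^ 2 := by positivity
  rw [Real.norm_eq_abs, Real.norm_eq_abs]
  calc |⟪A₀ y, ω⟫| ≤ K / (1 + s ^ 2) := by
        rw [le_div_iff₀ h1s]; exact hkey
    _ ≤ |K * (1 + s ^ 2)⁻¹| := by
        rw [div_eq_mul_inv]
        exact le_abs_self _
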